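/- Let S be a fusion set and ℤM the free fusion ring over S, i.e. the free ℤ-module with basis {a_w : w ∈ M} where M is the free monoid over S, with multiplication a_w · a_{w'} = Σ_{w = xy, w' = ȳz} (a_{xz} + a_{x·z}), where a_{x·z} is omitted when the fusion x·z is empty. Then ℤM is the free associative unital ℤ-algebra on the generators {a_s : s ∈ S}; in particular the monomials a_{s₁} ⋯ a_{s_k} (k ∈ ℕ, sᵢ ∈ S) form a ℤ-basis of ℤM. -/

import Mathlib

/-- Conjugation of a word: reverse the word and conjugate each letter. -/
def wconj {S : Type*} (c : S → S) (w : List S) : List S :=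
  (w.map c).reverse

/-- Fusion of two words: fuse last letter of `w` with first letter of `w'`. -/
def wfuse {S : Type*} (f : S → S → Option S) (w w' : List S) : Option (List S) :=
  match w.getLast?, w'.head? with
  | some a, some b => (f a b).map (fun r => w.dropLast ++ r :: w'.tail)
  | _, _ => none

section Aux
variable {S : Type*} [DecidableEq S] (f : S → S → Option S) (c : S → S)
  {R : Type*} [Ring R] (b : Module.Basis (List S) ℤ R)

/-- span of basis vectors of length `< n` -/
def Flt (n : ℕ) : Submodule ℤ R :=
  Submodule.span ℤ (⇑b '' {v | v.length < n})

lemma Flt_mono {m n : ℕ} (h : m ≤ n) : Flt b m ≤ Flt b n :=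
  Submodule.span_mono (Set.image_mono (fun v hv => lt_of_lt_of_le hv h))

lemma b_mem_Flt {v : List S} {n : ℕ} (h : v.length < n) : (b v : R) ∈ Flt b n :=
  Submodule.subset_span ⟨v, h, rfl⟩

lemma repr_eq_zero_of_mem_Flt {x : R} {n : ℕ} (hx : x ∈ Flt b n)
    {v : List S} (hv : n ≤ v.length) : b.repr x v = 0 := by
  induction hx using Submodule.span_induction with
  | mem y hy =>
      obtain ⟨u, hu, rfl⟩ := hy
      have hu' : u.length < n := hu
      have hne : u ≠ v := by rintro rfl; omega
      simp [Module.Basis.repr_self, Finsupp.single_apply, hne]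
  | zero => simp
  | add y z _ _ hy hz => simp [hy, hz]
  | smul a y _ hy => rw [map_smul]; simp [hy]

lemma mul_single_sub_mem
    (hmul : ∀ w w' : List S, (b w : R) * b w' =
      ∑ n ∈ Finset.range (min w.length w'.length + 1),
        if w'.take n = wconj c (w.drop (w.length - n)) then
          (b (w.take (w.length - n) ++ w'.drop n) +
            ((wfuse f (w.take (w.length - n)) (w'.drop n)).elim 0 (fun u => (b u : R))))
        else 0)
    (s : S) (w : List S) :
    (b [s] : R) * b w - b (s :: w) ∈ Flt b (w.length + 1) := by
  rcases w with _ | ⟨t, w'⟩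
  · rw [hmul]
    simp [wconj, wfuse]
  · rw [hmul]
    have hlen : min ([s].length) ((t :: w').length) = 1 := by simp
    rw [hlen]
    rw [Finset.sum_range_succ, Finset.sum_range_one]
    simp only [List.length_singleton, Nat.sub_zero, Nat.sub_self, List.take_zero, List.drop_zero,
      List.take_length, List.drop_length, List.take, List.drop]
    have h1 : wfuse f [s] (t :: w') = (f s t).map (fun r => r :: w') := by
      simp [wfuse]
    have h2 : wfuse f ([] : List S) w' = none := by
      simp [wfuse]
    have h3 : wconj c ([] : List S) = [] := rfl
    have h4 : wconj c [s] = [c s] := rfl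
    simp only [h1, h2, h3, h4, if_true, List.take_nil, List.nil_append, List.singleton_append,
      Option.elim_none, add_zero]
    have key : ∀ x : R, x ∈ Flt b ((t :: w').length + 1) →
        b (s :: t :: w') + x - b (s :: t :: w') ∈ Flt b ((t :: w').length + 1) := by
      intro x hx
      simpa using hx
    rw [add_assoc]
    apply key
    apply Submodule.add_mem
    · rcases hft : f s t with _ | r
      · simpa using Submodule.zero_mem (Flt b ((t :: w').length + 1))
      · simp only [hft, Option.map_some, Option.elim_some]
        refine b_mem_Flt b ?_
        simp only [List.length_cons]; omega
    · split
      · refine b_mem_Flt b ?_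
        simp only [List.length_cons]; omega
      · exact Submodule.zero_mem _

lemma single_mul_mem_Flt
    (hmul : ∀ w w' : List S, (b w : R) * b w' =
      ∑ n ∈ Finset.range (min w.length w'.length + 1),
        if w'.take n = wconj c (w.drop (w.length - n)) then
          (b (w.take (w.length - n) ++ w'.drop n) +
            ((wfuse f (w.take (w.length - n)) (w'.drop n)).elim 0 (fun u => (b u : R))))
        else 0)
    (s : S) {x : R} {n : ℕ} (hx : x ∈ Flt b n) :
    (b [s] : R) * x ∈ Flt b (n + 1) := by
  induction hx using Submodule.span_induction with
  | mem y hy =>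
      obtain ⟨u, hu, rfl⟩ := hy
      have hu' : u.length < n := hu
      have h1 : (b [s] : R) * b u - b (s :: u) ∈ Flt b (u.length + 1) :=
        mul_single_sub_mem f c b hmul s u
      have h2 : (b [s] : R) * b u =
          b (s :: u) + ((b [s] : R) * b u - b (s :: u)) := by abel
      rw [h2]
      exact Submodule.add_mem _ (b_mem_Flt b (by simp only [List.length_cons]; omega))
        (Flt_mono b (by omega) h1)
  | zero => simpa using Submodule.zero_mem (Flt b (n + 1))
  | add y z _ _ hy hz => rw [mul_add]; exact Submodule.add_mem _ hy hz
  | smul a y _ hy =>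
      rw [mul_smul_comm]
      exact Submodule.smul_mem _ a hy

lemma prod_sub_mem_Flt
    (hone : (b [] : R) = 1)
    (hmul : ∀ w w' : List S, (b w : R) * b w' =
      ∑ n ∈ Finset.range (min w.length w'.length + 1),
        if w'.take n = wconj c (w.drop (w.length - n)) then
          (b (w.take (w.length - n) ++ w'.drop n) +
            ((wfuse f (w.take (w.length - n)) (w'.drop n)).elim 0 (fun u => (b u : R))))
        else 0)
    (w : List S) :
    ((w.map fun s => (b [s] : R)).prod) - b w ∈ Flt b w.length := by
  induction w with
  | nil => simp [hone]
  | cons s w ih =>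
      have heq : (((s :: w).map fun s => (b [s] : R)).prod) - b (s :: w) =
          (b [s] : R) * (((w.map fun s => (b [s] : R)).prod) - b w) +
            ((b [s] : R) * b w - b (s :: w)) := by
        simp only [List.map_cons, List.prod_cons]
        rw [mul_sub]
        abel
      rw [heq]
      simp only [List.length_cons]
      exact Submodule.add_mem _ (single_mul_mem_Flt f c b hmul s ih)
        (mul_single_sub_mem f c b hmul s w)

lemma repr_prod
    (hone : (b [] : R) = 1)
    (hmul : ∀ w w' : List S, (b w : R) * b w' =
      ∑ n ∈ Finset.range (min w.length w'.length + 1),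
        if w'.take n = wconj c (w.drop (w.length - n)) then
          (b (w.take (w.length - n) ++ w'.drop n) +
            ((wfuse f (w.take (w.length - n)) (w'.drop n)).elim 0 (fun u => (b u : R))))
        else 0)
    (w v : List S) (hv : w.length ≤ v.length) :
    b.repr ((w.map fun s => (b [s] : R)).prod) v = if v = w then 1 else 0 := by
  have h : ((w.map fun s => (b [s] : R)).prod) =
      b w + (((w.map fun s => (b [s] : R)).prod) - b w) := by abel
  rw [h, map_add, Finsupp.add_apply,
    repr_eq_zero_of_mem_Flt b (prod_sub_mem_Flt f c b hone hmul w) hv, add_zero,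
    Module.Basis.repr_self, Finsupp.single_apply]
  by_cases hwv : w = v <;> simp [hwv, Ne.symm]

lemma equiv_monomial {S : Type*} (w : List S) :
    FreeAlgebra.equivMonoidAlgebraFreeMonoid (R := ℤ) (X := S)
      ((w.map (FreeAlgebra.ι ℤ)).prod) =
      MonoidAlgebra.single (FreeMonoid.ofList w) 1 := by
  induction w with
  | nil => simp [MonoidAlgebra.one_def]
  | cons s w ih =>
      simp only [List.map_cons, List.prod_cons, map_mul, ih]
      rw [FreeAlgebra.equivMonoidAlgebraFreeMonoid]
      simp only [AlgEquiv.ofAlgHom_apply, FreeAlgebra.lift_ι_apply]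
      rw [MonoidAlgebra.of_apply, MonoidAlgebra.single_mul_single, one_mul]
      rfl

lemma basisFreeMonoid_eq {S : Type*} (w : List S) :
    (FreeAlgebra.basisFreeMonoid ℤ S) (FreeMonoid.ofList w) =
      (w.map (FreeAlgebra.ι ℤ)).prod := by
  apply (FreeAlgebra.equivMonoidAlgebraFreeMonoid (R := ℤ) (X := S)).injective
  rw [equiv_monomial]
  rw [FreeAlgebra.basisFreeMonoid, Module.Basis.map_apply]
  simp only [Finsupp.coe_basisSingleOne]
  exact (AlgEquiv.apply_symm_apply _ _)

end Aux

/-- The free fusion ring over a fusion set `S` is the free associative unital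
ℤ-algebra on the generators `a_s`, `s ∈ S`; in particular the monomials
`a_{s₁} ⋯ a_{s_k}` form a ℤ-basis. -/
theorem freeFusionRing_free {S : Type*} [DecidableEq S]
    (f : S → S → Option S) (c : S → S)
    (hassoc : ∀ s t r : S, (f s t).bind (fun x => f x r) = (f t r).bind (fun x => f s x))
    (hinv : ∀ s : S, c (c s) = s)
    (hcompat : ∀ s₁ s₂ s₃ : S, f s₁ s₂ = some (c s₃) ↔ f s₂ s₃ = some (c s₁))
    {R : Type*} [Ring R] (b : Module.Basis (List S) ℤ R)
    (hone : (b [] : R) = 1)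
    (hmul : ∀ w w' : List S, (b w : R) * b w' =
      ∑ n ∈ Finset.range (min w.length w'.length + 1),
        if w'.take n = wconj c (w.drop (w.length - n)) then
          (b (w.take (w.length - n) ++ w'.drop n) +
            ((wfuse f (w.take (w.length - n)) (w'.drop n)).elim 0 (fun u => (b u : R))))
        else 0) :
    Function.Bijective ⇑(FreeAlgebra.lift ℤ (fun s : S => (b [s] : R))) ∧
    LinearIndependent ℤ (fun w : List S => ((w.map fun s => (b [s] : R)).prod)) ∧
    Submodule.span ℤ (Set.range fun w : List S => ((w.map fun s => (b [s] : R)).prod)) = ⊤ := by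
  set P : List S → R := fun w => ((w.map fun s => (b [s] : R)).prod) with hP
  have hli : LinearIndependent ℤ P := by
    rw [linearIndependent_iff]
    intro l hl
    by_contra hne
    obtain ⟨w₀, hw₀mem, hmax⟩ :=
      l.support.exists_max_image List.length (Finsupp.support_nonempty_iff.mpr hne)
    have h0 : b.repr (Finsupp.linearCombination ℤ P l) w₀ = 0 := by rw [hl]; simp
    rw [Finsupp.linearCombination_apply, Finsupp.sum, map_sum, Finsupp.finset_sum_apply] at h0
    have hterm : ∀ w ∈ l.support, b.repr (l w • P w) w₀ = if w = w₀ then l w else 0 := by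
      intro w hw
      rw [map_smul, Finsupp.smul_apply,
        repr_prod f c b hone hmul w w₀ (hmax w hw)]
      by_cases h : w = w₀ <;> simp [h, Ne.symm]
    rw [Finset.sum_congr rfl hterm, Finset.sum_ite_eq' _ w₀ _] at h0
    rw [if_pos hw₀mem] at h0
    exact Finsupp.mem_support_iff.mp hw₀mem h0
  have hspan : Submodule.span ℤ (Set.range P) = ⊤ := by
    have hb : ∀ n : ℕ, ∀ w : List S, w.length < n →
        (b w : R) ∈ Submodule.span ℤ (Set.range P) := by
      intro n
      induction n with
      | zero => intro w h; omega
      | succ n ih =>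
          intro w h
          have h1 : P w - b w ∈ Flt b w.length := prod_sub_mem_Flt f c b hone hmul w
          have h2 : Flt b w.length ≤ Submodule.span ℤ (Set.range P) := by
            rw [Flt, Submodule.span_le]
            rintro _ ⟨v, hv, rfl⟩
            exact ih v (by exact lt_of_lt_of_le hv (by omega))
          have h3 : (b w : R) = P w - (P w - b w) := by abel
          rw [h3]
          exact Submodule.sub_mem _ (Submodule.subset_span ⟨w, rfl⟩) (h2 h1)
    rw [eq_top_iff, ← b.span_eq, Submodule.span_le]
    rintro _ ⟨w, rfl⟩
    exact hb (w.length + 1) w (by omega)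
  refine ⟨?_, hli, hspan⟩
  let Pb : Module.Basis (List S) ℤ R := Module.Basis.mk hli (by rw [hspan])
  let B : Module.Basis (List S) ℤ (FreeAlgebra ℤ S) :=
    (FreeAlgebra.basisFreeMonoid ℤ S).reindex FreeMonoid.toList
  have hB : ∀ w : List S, B w = (w.map (FreeAlgebra.ι ℤ)).prod := by
    intro w
    rw [show B w = _ from Module.Basis.reindex_apply _ _ _]
    exact basisFreeMonoid_eq w
  let ψ : FreeAlgebra ℤ S ≃ₗ[ℤ] R := B.equiv Pb (Equiv.refl _)
  have heq : (FreeAlgebra.lift ℤ (fun s : S => (b [s] : R))).toLinearMap =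
      ψ.toLinearMap := by
    apply B.ext
    intro w
    have h1 : (FreeAlgebra.lift ℤ (fun s : S => (b [s] : R))) (B w) = P w := by
      rw [hB, map_list_prod]
      simp [List.map_map, Function.comp_def, FreeAlgebra.lift_ι_apply, hP]
    have h2 : ψ (B w) = P w := by
      rw [show ψ (B w) = Pb (Equiv.refl _ w) from Module.Basis.equiv_apply B w Pb _]
      simp [Pb, Module.Basis.mk_apply]
    exact h1.trans h2.symm
  have hfun : ⇑(FreeAlgebra.lift ℤ (fun s : S => (b [s] : R))) = ⇑ψ := by
    ext x
    exact LinearMap.congr_fun heq x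
  rw [hfun]
  exact ψ.bijective
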